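/- Let (U,V) be a couple of nonnegative real random variables such that P(U ≤ t) ≤ t for all t ∈ [0,1], and such that for every r ≥ 0 the function u ↦ P(V < r | U ≤ u) is nondecreasing in u (on the set where P(U ≤ u) > 0). Then for every c > 0, E[ 1_{U ≤ c V} / V ] ≤ c. -/

import Mathlib

open MeasureTheory ENNReal Set

/-- Telescoping sum of truncated differences of an antitone `[0,1]`-valued
sequence indexed by `ℤ` is at most `1`. -/
lemma tsum_tele_le_one (ρ : ℤ → ℝ≥0∞) (h1 : ∀ m, ρ m ≤ 1)
    (hstep : ∀ n : ℤ, ρ n ≤ ρ (n - 1)) :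
    (∑' n : ℤ, (ρ (n - 1) - ρ n)) ≤ 1 := by
  have anti : ∀ m n : ℤ, m ≤ n → ρ n ≤ ρ m := fun m =>
    Int.le_induction (le_refl _)
      (fun n _hn ih => le_trans (by simpa using hstep (n + 1)) ih)
  have tele : ∀ a b : ℤ, a ≤ b →
      (∑ n ∈ Finset.Icc a b, (ρ (n - 1) - ρ n)) ≤ ρ (a - 1) - ρ b := by
    intro a
    refine Int.le_induction ?_ ?_
    · simp
    · intro b hb ih
      have hins : Finset.Icc a (b + 1) = insert (b + 1) (Finset.Icc a b) := by
        ext x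
        simp only [Finset.mem_Icc, Finset.mem_insert]
        omega
      rw [hins, Finset.sum_insert (by simp)]
      have h1' : ρ (b + 1 - 1) - ρ (b + 1) = ρ b - ρ (b + 1) := by norm_num
      rw [h1']
      calc ρ b - ρ (b + 1) + ∑ n ∈ Finset.Icc a b, (ρ (n - 1) - ρ n)
          ≤ ρ b - ρ (b + 1) + (ρ (a - 1) - ρ b) := by exact add_le_add le_rfl ih
        _ = (ρ (a - 1) - ρ b) + (ρ b - ρ (b + 1)) := by ring
        _ = ρ (a - 1) - ρ (b + 1) :=
            tsub_add_tsub_cancel (anti _ _ (by omega))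
              (by simpa using hstep (b + 1))
  rw [ENNReal.tsum_eq_iSup_sum]
  refine iSup_le fun s => ?_
  rcases s.eq_empty_or_nonempty with rfl | hs
  · simp
  · have hsub : s ⊆ Finset.Icc (s.min' hs) (s.max' hs) := fun x hx =>
      Finset.mem_Icc.2 ⟨Finset.min'_le s x hx, Finset.le_max' s x hx⟩
    calc (∑ n ∈ s, (ρ (n - 1) - ρ n))
        ≤ ∑ n ∈ Finset.Icc (s.min' hs) (s.max' hs), (ρ (n - 1) - ρ n) :=
          Finset.sum_le_sum_of_subset hsub
      _ ≤ ρ (s.min' hs - 1) - ρ (s.max' hs) :=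
          tele _ _ (s.min'_le _ (s.max'_mem hs))
      _ ≤ ρ (s.min' hs - 1) := tsub_le_self
      _ ≤ 1 := h1 _

/-- Part (ii) of Lemma 3.2: if `U` is stochastically lower bounded by a uniform
variable on `[0,1]` and the conditional distribution of `V` given `{U ≤ u}` is
stochastically decreasing in `u`, then `E[1_{U ≤ c V} / V] ≤ c` for all `c > 0`. -/
theorem dependency_control_stochastically_decreasing
    {Ω : Type*} [MeasurableSpace Ω] (P : Measure Ω) [IsProbabilityMeasure P]
    (U V : Ω → ℝ) (hU : Measurable U) (hV : Measurable V)
    (hUpos : ∀ ω, 0 ≤ U ω) (hVpos : ∀ ω, 0 ≤ V ω)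
    (hUnif : ∀ t : ℝ, 0 ≤ t → t ≤ 1 → P {ω | U ω ≤ t} ≤ ENNReal.ofReal t)
    (hdec : ∀ r : ℝ, 0 ≤ r → ∀ u u' : ℝ, 0 ≤ u → u ≤ u' →
      0 < P {ω | U ω ≤ u} →
      P {ω | V ω < r ∧ U ω ≤ u} / P {ω | U ω ≤ u}
        ≤ P {ω | V ω < r ∧ U ω ≤ u'} / P {ω | U ω ≤ u'})
    (c : ℝ) (hc : 0 < c) :
    ∫⁻ ω in {ω | U ω ≤ c * V ω ∧ 0 < V ω}, ENNReal.ofReal (V ω)⁻¹ ∂P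
      ≤ ENNReal.ofReal c := by
  have key : ∀ l : ℝ, 0 < l → l < 1 →
      ∫⁻ ω in {ω | U ω ≤ c * V ω ∧ 0 < V ω}, ENNReal.ofReal (V ω)⁻¹ ∂P
        ≤ ENNReal.ofReal (c / l) := by
    intro l hl0 hl1
    have hlz : ∀ n : ℤ, (0 : ℝ) < l ^ n := fun n => zpow_pos hl0 n
    have hlanti : ∀ m n : ℤ, m ≤ n → l ^ n ≤ l ^ m := fun m n h =>
      zpow_le_zpow_right_of_le_one₀ hl0 hl1.le h
    -- layers in `V`
    set An : ℤ → Set Ω := fun n =>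
      {ω | U ω ≤ c * V ω ∧ l ^ n ≤ V ω ∧ V ω < l ^ (n - 1)} with hAn
    set B : ℤ → Set Ω := fun m => {ω | V ω < l ^ m ∧ U ω ≤ c * l ^ m} with hB
    set Cn : ℤ → Set Ω := fun n => {ω | V ω < l ^ n ∧ U ω ≤ c * l ^ (n - 1)} with hCn
    set F : ℤ → ℝ≥0∞ := fun m => P {ω | U ω ≤ c * l ^ m} with hF
    set ρ : ℤ → ℝ≥0∞ := fun m => P (B m) / F m with hρ
    have mAn : ∀ n, MeasurableSet (An n) := fun n =>
      (measurableSet_le hU (hV.const_mul c)).inter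
        ((measurableSet_le measurable_const hV).inter
          (measurableSet_lt hV measurable_const))
    have mCn : ∀ n, MeasurableSet (Cn n) := fun n =>
      (measurableSet_lt hV measurable_const).inter (measurableSet_le hU measurable_const)
    have hBF : ∀ m, P (B m) ≤ F m := fun m => measure_mono fun ω h => h.2
    have hFmono : ∀ n : ℤ, F n ≤ F (n - 1) := fun n =>
      measure_mono fun ω h =>
        le_trans h (mul_le_mul_of_nonneg_left (hlanti _ _ (by omega)) hc.le)
    have hρ1 : ∀ m, ρ m ≤ 1 := fun m =>
      le_trans (ENNReal.div_le_div_right (hBF m) _) ENNReal.div_self_le_one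
    have hCB : ∀ n : ℤ, Cn n ⊆ B (n - 1) := fun n ω h =>
      ⟨lt_of_lt_of_le h.1 (hlanti _ _ (by omega)), h.2⟩
    have hACB : ∀ n : ℤ, An n ⊆ B (n - 1) \ Cn n := by
      intro n ω h
      refine ⟨⟨h.2.2, le_trans h.1 (mul_le_mul_of_nonneg_left h.2.2.le hc.le)⟩, ?_⟩
      intro h'
      exact absurd h.2.1 (not_le.2 h'.1)
    have h4 : ∀ n : ℤ, F (n - 1) * ρ n ≤ P (Cn n) := by
      intro n
      rcases eq_or_ne (F n) 0 with h0 | h0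
      · have hb : P (B n) = 0 := le_antisymm (h0 ▸ hBF n) zero_le
        simp [hρ, hb]
      · have hd := hdec (l ^ n) (hlz n).le (c * l ^ n) (c * l ^ (n - 1)) (by positivity)
          (mul_le_mul_of_nonneg_left (hlanti _ _ (by omega)) hc.le) (pos_iff_ne_zero.2 h0)
        calc F (n - 1) * ρ n ≤ F (n - 1) * (P (Cn n) / F (n - 1)) :=
              mul_le_mul_right hd _
          _ ≤ P (Cn n) := ENNReal.mul_div_le
    have h5 : ∀ n : ℤ, P (B (n - 1)) ≤ F (n - 1) * ρ (n - 1) := by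
      intro n
      rcases eq_or_ne (F (n - 1)) 0 with h0 | h0
      · have hb : P (B (n - 1)) = 0 := le_antisymm (h0 ▸ hBF (n - 1)) zero_le
        simp [hb]
      · rw [hρ]
        rw [ENNReal.mul_div_cancel h0 (measure_ne_top P _)]
    have hstepρ : ∀ n : ℤ, ρ n ≤ ρ (n - 1) := by
      intro n
      rcases eq_or_ne (F (n - 1)) 0 with h0 | h0
      · have hFn : F n = 0 := le_antisymm (h0 ▸ hFmono n) zero_le
        have hb : P (B n) = 0 := le_antisymm (hFn ▸ hBF n) zero_le
        simp [hρ, hb]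
      · have h' : F (n - 1) * ρ n ≤ P (B (n - 1)) :=
          le_trans (h4 n) (measure_mono (hCB n))
        rw [hρ]
        rw [ENNReal.le_div_iff_mul_le (Or.inl h0) (Or.inl (measure_ne_top P _))]
        rwa [mul_comm]
    have hFle : ∀ n : ℤ, F (n - 1) ≤ ENNReal.ofReal (c * l ^ (n - 1)) := by
      intro n
      by_cases h : c * l ^ (n - 1) ≤ 1
      · exact hUnif _ (by positivity) h
      · refine le_trans prob_le_one ?_
        rw [← ENNReal.ofReal_one]
        exact ENNReal.ofReal_le_ofReal (not_le.1 h).le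
    have harith : ∀ n : ℤ, (l ^ n)⁻¹ * (c * l ^ (n - 1)) = c / l := by
      intro n
      rw [zpow_sub_one₀ hl0.ne']
      field_simp
    have h6 : ∀ n : ℤ, ∫⁻ ω in An n, ENNReal.ofReal (V ω)⁻¹ ∂P
        ≤ ENNReal.ofReal (c / l) * (ρ (n - 1) - ρ n) := by
      intro n
      have hconst : ∫⁻ ω in An n, ENNReal.ofReal (V ω)⁻¹ ∂P
          ≤ ENNReal.ofReal ((l ^ n)⁻¹) * P (An n) := by
        calc ∫⁻ ω in An n, ENNReal.ofReal (V ω)⁻¹ ∂P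
            ≤ ∫⁻ _ω in An n, ENNReal.ofReal ((l ^ n)⁻¹) ∂P := by
              refine setLIntegral_mono' (mAn n) fun ω hω => ?_
              exact ENNReal.ofReal_le_ofReal
                (inv_anti₀ (hlz n) hω.2.1)
          _ = ENNReal.ofReal ((l ^ n)⁻¹) * P (An n) := setLIntegral_const _ _
      have hPA : P (An n) ≤ F (n - 1) * ρ (n - 1) - F (n - 1) * ρ n := by
        calc P (An n) ≤ P (B (n - 1) \ Cn n) := measure_mono (hACB n)
          _ = P (B (n - 1)) - P (Cn n) :=
              measure_diff (hCB n) (mCn n).nullMeasurableSet (measure_ne_top P _)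
          _ ≤ F (n - 1) * ρ (n - 1) - F (n - 1) * ρ n := tsub_le_tsub (h5 n) (h4 n)
      have hsubmul : F (n - 1) * ρ (n - 1) - F (n - 1) * ρ n
          ≤ F (n - 1) * (ρ (n - 1) - ρ n) := by
        rw [tsub_le_iff_right, ← mul_add]
        exact mul_le_mul_right le_tsub_add _
      calc ∫⁻ ω in An n, ENNReal.ofReal (V ω)⁻¹ ∂P
          ≤ ENNReal.ofReal ((l ^ n)⁻¹) * P (An n) := hconst
        _ ≤ ENNReal.ofReal ((l ^ n)⁻¹) * (F (n - 1) * (ρ (n - 1) - ρ n)) :=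
            mul_le_mul_right (le_trans hPA hsubmul) _
        _ = (ENNReal.ofReal ((l ^ n)⁻¹) * F (n - 1)) * (ρ (n - 1) - ρ n) := by ring
        _ ≤ (ENNReal.ofReal ((l ^ n)⁻¹) * ENNReal.ofReal (c * l ^ (n - 1)))
              * (ρ (n - 1) - ρ n) :=
            mul_le_mul_left (mul_le_mul_right (hFle n) _) _
        _ = ENNReal.ofReal (c / l) * (ρ (n - 1) - ρ n) := by
            rw [← ENNReal.ofReal_mul (by positivity), harith n]
    have hsub : {ω | U ω ≤ c * V ω ∧ 0 < V ω} ⊆ ⋃ n : ℤ, An n := by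
      rintro ω ⟨h1, h2⟩
      obtain ⟨k, hk1, hk2⟩ := exists_mem_Ico_zpow h2 (one_lt_inv_iff₀.2 ⟨hl0, hl1⟩)
      refine mem_iUnion.2 ⟨-k, h1, ?_, ?_⟩
      · rwa [inv_zpow, ← zpow_neg] at hk1
      · rw [inv_zpow, ← zpow_neg] at hk2
        have : -(k + 1) = -k - 1 := by ring
        rwa [this] at hk2
    calc ∫⁻ ω in {ω | U ω ≤ c * V ω ∧ 0 < V ω}, ENNReal.ofReal (V ω)⁻¹ ∂P
        ≤ ∫⁻ ω in ⋃ n : ℤ, An n, ENNReal.ofReal (V ω)⁻¹ ∂P :=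
          lintegral_mono_set hsub
      _ ≤ ∑' n : ℤ, ∫⁻ ω in An n, ENNReal.ofReal (V ω)⁻¹ ∂P :=
          lintegral_iUnion_le _ _
      _ ≤ ∑' n : ℤ, ENNReal.ofReal (c / l) * (ρ (n - 1) - ρ n) :=
          ENNReal.tsum_le_tsum h6
      _ = ENNReal.ofReal (c / l) * ∑' n : ℤ, (ρ (n - 1) - ρ n) :=
          ENNReal.tsum_mul_left
      _ ≤ ENNReal.ofReal (c / l) * 1 :=
          mul_le_mul_right (tsum_tele_le_one ρ hρ1 hstepρ) _
      _ = ENNReal.ofReal (c / l) := mul_one _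
  refine ENNReal.le_of_forall_pos_le_add fun ε hε _ => ?_
  have hεR : (0 : ℝ) < (ε : ℝ) := hε
  have hl0 : 0 < c / (c + ε) := div_pos hc (by positivity)
  have hl1 : c / (c + ε) < 1 := (div_lt_one (by positivity)).2 (lt_add_of_pos_right c hεR)
  have h := key _ hl0 hl1
  have hcl : c / (c / (c + (ε : ℝ))) = c + ε := by
    field_simp
  rw [hcl, ENNReal.ofReal_add hc.le hεR.le, ENNReal.ofReal_coe_nnreal] at h
  exact h
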